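/- Let n ≥ 2 be an integer, R > 0, M_R ≥ 0, and let b : ℝ² → ℝ be measurable with |b(x)| ≤ M_R for almost every x in the ball B_R(0) = {x ∈ ℝ² : |x| < R}. Then ∫_{B_R(0)} b(x) G̃_n(x)² dx ≤ R² M_R/(4 log n). -/

import Mathlib

open Real MeasureTheory

/-- The truncated Moser function `G̃ₙ` on `ℝ²`. -/
noncomputable def moserFun (n : ℕ) (R : ℝ) (x : EuclideanSpace ℝ (Fin 2)) : ℝ :=
  if ‖x‖ ≤ R / n then Real.sqrt (Real.log n) / Real.sqrt (2 * π)
  else if ‖x‖ ≤ R then Real.log (R / ‖x‖) / (Real.sqrt (2 * π) * Real.sqrt (Real.log n))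
  else 0

theorem stmt_10 (n : ℕ) (R M_R : ℝ) (hn : 2 ≤ n) (hR : 0 < R) (hM : 0 ≤ M_R)
    (b : EuclideanSpace ℝ (Fin 2) → ℝ) (hb_meas : Measurable b)
    (hb_bdd : ∀ᵐ x ∂(volume.restrict (Metric.ball (0 : EuclideanSpace ℝ (Fin 2)) R)),
      |b x| ≤ M_R) :
    ∫ x in Metric.ball (0 : EuclideanSpace ℝ (Fin 2)) R, b x * (moserFun n R x) ^ 2
      ≤ R ^ 2 * M_R / (4 * Real.log n) := by
  have hn1 : (1:ℝ) < n := by exact_mod_cast lt_of_lt_of_le one_lt_two (by exact_mod_cast hn)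
  have hn0 : (0:ℝ) < n := lt_trans one_pos hn1
  set L := Real.log n with hLdef
  have hL : 0 < L := Real.log_pos hn1
  have hπ : (0:ℝ) < π := Real.pi_pos
  have ha0 : 0 < R / n := div_pos hR hn0
  have haR : R / n < R := div_lt_self hR hn1
  -- measurability of moserFun
  have hGmeas : Measurable (moserFun n R) := by
    unfold moserFun
    refine Measurable.ite (measurableSet_le measurable_norm measurable_const) measurable_const ?_
    exact Measurable.ite (measurableSet_le measurable_norm measurable_const)
      ((Real.measurable_log.comp (measurable_const.div measurable_norm)).div_const _)
      measurable_const
  -- pointwise bound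
  have hGsq_le : ∀ x, (moserFun n R x)^2 ≤ L/(2*π) := by
    intro x
    unfold moserFun
    split_ifs with h1 h2
    · rw [div_pow, Real.sq_sqrt hL.le, Real.sq_sqrt (by positivity : (0:ℝ) ≤ 2*π)]
    · push_neg at h1
      have hx0 : 0 < ‖x‖ := lt_trans ha0 h1
      have hlog0 : 0 ≤ Real.log (R/‖x‖) := Real.log_nonneg ((one_le_div hx0).mpr h2)
      have hlogL : Real.log (R/‖x‖) ≤ L := by
        have htn : R/‖x‖ ≤ (n:ℝ) := by
          rw [div_le_iff₀ hx0]
          have := (div_lt_iff₀ hn0).mp h1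
          linarith
        exact Real.log_le_log (by positivity) htn
      rw [div_pow, mul_pow, Real.sq_sqrt (by positivity : (0:ℝ) ≤ 2*π), Real.sq_sqrt hL.le,
        div_le_div_iff₀ (by positivity) (by positivity)]
      nlinarith [mul_le_mul hlogL hlogL hlog0 hL.le, hπ.le,
        mul_le_mul_of_nonneg_right (mul_le_mul hlogL hlogL hlog0 hL.le)
          (by positivity : (0:ℝ) ≤ 2*π)]
    · have : ((0:ℝ))^2 = 0 := by norm_num
      rw [this]
      positivity
  -- radial profile
  set h : ℝ → ℝ := fun r =>
    if r ≤ R / n then L/(2*π) else if r < R then (Real.log (R/r))^2/(2*π*L) else 0 with hhdef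
  have hradial : ∀ x : EuclideanSpace ℝ (Fin 2), ‖x‖ < R → (moserFun n R x)^2 = h ‖x‖ := by
    intro x hx
    unfold moserFun
    simp only [hhdef]
    by_cases h1 : ‖x‖ ≤ R/(n:ℝ)
    · rw [if_pos h1, if_pos h1, div_pow, Real.sq_sqrt hL.le,
        Real.sq_sqrt (by positivity : (0:ℝ) ≤ 2*π)]
    · rw [if_neg h1, if_neg h1, if_pos hx.le, if_pos hx, div_pow, mul_pow,
        Real.sq_sqrt (by positivity : (0:ℝ) ≤ 2*π), Real.sq_sqrt hL.le]
  have hzero : ∀ x : EuclideanSpace ℝ (Fin 2), x ∉ Metric.ball (0 : EuclideanSpace ℝ (Fin 2)) R →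
      h ‖x‖ = 0 := by
    intro x hx
    rw [Metric.mem_ball, dist_zero_right] at hx
    simp only [hhdef]
    rw [if_neg (fun hc => hx (lt_of_le_of_lt hc haR)), if_neg hx]
  -- value of the radial integral
  have hIval : ∫ y in Set.Ioi (0:ℝ), y * h y
      = (L/(2*π)) * ((R/n)^2/2)
        + (R^2/4 - ((R/n)^2/2*L^2 + (R/n)^2/2*L + (R/n)^2/4))/(2*π*L) := by
    have hf1 : Set.EqOn (fun y => y * h y) (fun y => y * (L/(2*π))) (Set.Ioc (0:ℝ) (R/n)) := by
      intro y hy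
      simp only [hhdef, if_pos hy.2]
    have hf2 : Set.EqOn (fun y => y * h y)
        (fun y => y * ((Real.log (R/y))^2/(2*π*L))) (Set.Ioc (R/n) R) := by
      intro y hy
      simp only [hhdef, if_neg (not_le.mpr hy.1)]
      rcases lt_or_eq_of_le hy.2 with hyR | hyR
      · rw [if_pos hyR]
      · rw [if_neg (by rw [hyR]; exact lt_irrefl R), hyR, div_self hR.ne', Real.log_one]
        ring
    have hf3 : Set.EqOn (fun y => y * h y) (fun _ => (0:ℝ)) (Set.Ioi R) := by
      intro y hy
      simp only [hhdef, if_neg (not_le.mpr (lt_trans haR hy)), if_neg (not_lt.mpr (le_of_lt (Set.mem_Ioi.mp hy))),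
        mul_zero]
    have hiOn1 : IntegrableOn (fun y => y * h y) (Set.Ioc (0:ℝ) (R/n)) := by
      rw [integrableOn_congr_fun hf1 measurableSet_Ioc]
      exact (continuous_id.mul continuous_const).integrableOn_Ioc
    have hiOn2 : IntegrableOn (fun y => y * h y) (Set.Ioc (R/n) R) := by
      rw [integrableOn_congr_fun hf2 measurableSet_Ioc]
      refine (ContinuousOn.integrableOn_Icc ?_).mono_set Set.Ioc_subset_Icc_self
      refine continuousOn_id.mul (ContinuousOn.div_const (ContinuousOn.pow ?_ 2) _)
      refine Real.continuousOn_log.comp (continuousOn_const.div continuousOn_id ?_) ?_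
      · intro y hy
        exact (lt_of_lt_of_le ha0 hy.1).ne'
      · intro y hy
        exact div_ne_zero hR.ne' (lt_of_lt_of_le ha0 hy.1).ne'
    have hiOn3 : IntegrableOn (fun y => y * h y) (Set.Ioi R) := by
      rw [integrableOn_congr_fun hf3 measurableSet_Ioi]
      exact integrableOn_zero
    have hv1 : ∫ y in Set.Ioc (0:ℝ) (R/n), y * h y = (L/(2*π)) * ((R/n)^2/2) := by
      rw [setIntegral_congr_fun measurableSet_Ioc hf1, ← intervalIntegral.integral_of_le ha0.le,
        intervalIntegral.integral_mul_const, integral_id]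
      ring
    have hFTC : ∫ y in (R/n)..R, y * (Real.log R - Real.log y)^2
        = R^2/4 - ((R/n)^2/2*L^2 + (R/n)^2/2*L + (R/n)^2/4) := by
      have hderiv : ∀ y ∈ Set.uIcc (R/n) R, HasDerivAt
          (fun y => y^2/2*(Real.log R - Real.log y)^2 + y^2/2*(Real.log R - Real.log y) + y^2/4)
          (y * (Real.log R - Real.log y)^2) y := by
        intro y hy
        rw [Set.uIcc_of_le haR.le] at hy
        have hy0 : 0 < y := lt_of_lt_of_le ha0 hy.1
        have hlog : HasDerivAt (fun y => Real.log R - Real.log y) (-y⁻¹) y := by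
          exact ((hasDerivAt_const y (Real.log R)).sub (Real.hasDerivAt_log hy0.ne')).congr_deriv (by ring)
        have hsq : HasDerivAt (fun y : ℝ => y^2/2) y y := by
          simpa using (hasDerivAt_pow 2 y).div_const 2
        have hq : HasDerivAt (fun y : ℝ => y^2/4) (2 * y ^ 1 / 4) y :=
          (hasDerivAt_pow 2 y).div_const 4
        refine HasDerivAt.congr_deriv (((hsq.mul (hlog.pow 2)).add (hsq.mul hlog)).add hq) ?_
        simp only [Pi.pow_apply]
        field_simp
        ring
      have hicont : IntervalIntegrable (fun y => y * (Real.log R - Real.log y)^2)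
          volume (R/n) R := by
        apply ContinuousOn.intervalIntegrable
        rw [Set.uIcc_of_le haR.le]
        refine continuousOn_id.mul (ContinuousOn.pow (continuousOn_const.sub ?_) 2)
        refine Real.continuousOn_log.mono ?_
        intro y hy
        exact (lt_of_lt_of_le ha0 hy.1).ne'
      rw [intervalIntegral.integral_eq_sub_of_hasDerivAt hderiv hicont]
      have hlogn : Real.log R - Real.log (R/n) = L := by
        rw [Real.log_div hR.ne' hn0.ne']
        ring
      simp only [hlogn, sub_self]
      ring
    have hv2 : ∫ y in Set.Ioc (R/n) R, y * h y
        = (R^2/4 - ((R/n)^2/2*L^2 + (R/n)^2/2*L + (R/n)^2/4))/(2*π*L) := by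
      rw [setIntegral_congr_fun measurableSet_Ioc hf2, ← intervalIntegral.integral_of_le haR.le]
      have heq : Set.EqOn (fun y => y * ((Real.log (R/y))^2/(2*π*L)))
          (fun y => (y * (Real.log R - Real.log y)^2) / (2*π*L)) (Set.uIcc (R/n) R) := by
        intro y hy
        rw [Set.uIcc_of_le haR.le] at hy
        have hy0 : 0 < y := lt_of_lt_of_le ha0 hy.1
        simp only [Real.log_div hR.ne' hy0.ne']
        ring
      rw [intervalIntegral.integral_congr heq, intervalIntegral.integral_div, hFTC]
    have hv3 : ∫ y in Set.Ioi R, y * h y = 0 := by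
      rw [setIntegral_congr_fun measurableSet_Ioi hf3]
      simp
    have hu1 : Set.Ioc (R/n) R ∪ Set.Ioi R = Set.Ioi (R/n) := Set.Ioc_union_Ioi_eq_Ioi haR.le
    have hu0 : Set.Ioc (0:ℝ) (R/n) ∪ Set.Ioi (R/n) = Set.Ioi 0 := Set.Ioc_union_Ioi_eq_Ioi ha0.le
    have hiOn23 : IntegrableOn (fun y => y * h y) (Set.Ioi (R/n)) := by
      rw [← hu1]
      exact hiOn2.union hiOn3
    have e2 : ∫ y in Set.Ioi (R/n), y * h y
        = (∫ y in Set.Ioc (R/n) R, y * h y) + ∫ y in Set.Ioi R, y * h y := by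
      rw [← hu1, setIntegral_union Set.Ioc_disjoint_Ioi_same measurableSet_Ioi hiOn2 hiOn3]
    have e1 : ∫ y in Set.Ioi (0:ℝ), y * h y
        = (∫ y in Set.Ioc (0:ℝ) (R/n), y * h y) + ∫ y in Set.Ioi (R/n), y * h y := by
      rw [← hu0, setIntegral_union Set.Ioc_disjoint_Ioi_same measurableSet_Ioi hiOn1 hiOn23]
    rw [e1, e2, hv1, hv2, hv3]
    ring
  -- the main integral value bound
  have key : ∫ x in Metric.ball (0 : EuclideanSpace ℝ (Fin 2)) R, (moserFun n R x)^2
      ≤ R^2/(4*L) := by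
    have h1 : ∫ x in Metric.ball (0 : EuclideanSpace ℝ (Fin 2)) R, (moserFun n R x)^2
        = ∫ x : EuclideanSpace ℝ (Fin 2), h ‖x‖ := by
      rw [← setIntegral_eq_integral_of_forall_compl_eq_zero hzero]
      exact setIntegral_congr_fun measurableSet_ball fun x hx => hradial x (by simpa using hx)
    have h2 : ∫ x : EuclideanSpace ℝ (Fin 2), h ‖x‖
        = 2 * (π * ∫ y in Set.Ioi (0:ℝ), y * h y) := by
      rw [integral_fun_norm_addHaar volume h]
      have hrk : Module.finrank ℝ (EuclideanSpace ℝ (Fin 2)) = 2 := finrank_euclideanSpace_fin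
      have hvol : (volume (Metric.ball (0:EuclideanSpace ℝ (Fin 2)) 1)).toReal = π := by
        rw [EuclideanSpace.volume_ball]
        norm_num [Real.Gamma_two, Real.sq_sqrt Real.pi_pos.le,
          ENNReal.toReal_ofReal Real.pi_pos.le]
      rw [hrk, measureReal_def, hvol]
      simp [pow_one, smul_eq_mul, mul_assoc]
    rw [h1, h2, hIval]
    have hid : 2 * (π * ((L/(2*π)) * ((R/n)^2/2)
        + (R^2/4 - ((R/n)^2/2*L^2 + (R/n)^2/2*L + (R/n)^2/4))/(2*π*L)))
        = R^2/(4*L) - (R/n)^2/2 - (R/n)^2/(4*L) := by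
      field_simp
      ring
    rw [hid]
    have h3 : 0 ≤ (R/n)^2/2 := by positivity
    have h4 : 0 ≤ (R/n)^2/(4*L) := by positivity
    linarith
  -- integrability
  haveI : IsFiniteMeasure (volume.restrict (Metric.ball (0 : EuclideanSpace ℝ (Fin 2)) R)) :=
    ⟨by rw [Measure.restrict_apply_univ]; exact measure_ball_lt_top⟩
  have hG2meas : Measurable fun x => (moserFun n R x)^2 := hGmeas.pow_const 2
  have hint2 : Integrable (fun x => M_R * (moserFun n R x)^2)
      (volume.restrict (Metric.ball (0 : EuclideanSpace ℝ (Fin 2)) R)) := by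
    refine (integrable_const (M_R * (L/(2*π)))).mono'
      ((hG2meas.const_mul M_R).aestronglyMeasurable) ?_
    filter_upwards with x
    rw [Real.norm_eq_abs, abs_mul, abs_of_nonneg hM, abs_of_nonneg (sq_nonneg _)]
    exact mul_le_mul_of_nonneg_left (hGsq_le x) hM
  have hint1 : Integrable (fun x => b x * (moserFun n R x)^2)
      (volume.restrict (Metric.ball (0 : EuclideanSpace ℝ (Fin 2)) R)) := by
    refine (integrable_const (M_R * (L/(2*π)))).mono'
      ((hb_meas.mul hG2meas).aestronglyMeasurable) ?_
    filter_upwards [hb_bdd] with x hx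
    rw [Real.norm_eq_abs, abs_mul, abs_of_nonneg (sq_nonneg (moserFun n R x))]
    exact mul_le_mul hx (hGsq_le x) (sq_nonneg _) hM
  have hmono : ∫ x in Metric.ball (0 : EuclideanSpace ℝ (Fin 2)) R, b x * (moserFun n R x)^2
      ≤ ∫ x in Metric.ball (0 : EuclideanSpace ℝ (Fin 2)) R, M_R * (moserFun n R x)^2 := by
    refine integral_mono_ae hint1 hint2 ?_
    filter_upwards [hb_bdd] with x hx
    exact mul_le_mul_of_nonneg_right ((le_abs_self _).trans hx) (sq_nonneg _)
  calc ∫ x in Metric.ball (0 : EuclideanSpace ℝ (Fin 2)) R, b x * (moserFun n R x)^2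
      ≤ ∫ x in Metric.ball (0 : EuclideanSpace ℝ (Fin 2)) R, M_R * (moserFun n R x)^2 := hmono
    _ = M_R * ∫ x in Metric.ball (0 : EuclideanSpace ℝ (Fin 2)) R, (moserFun n R x)^2 :=
        integral_const_mul _ _
    _ ≤ M_R * (R^2/(4*L)) := mul_le_mul_of_nonneg_left key hM
    _ = R ^ 2 * M_R / (4 * L) := by ring
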